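/- Every configuration of the 9-puzzle can be transformed into any other configuration via legal synchronous cycle-rotation moves; i.e., the reachability relation on configurations of 9 labeled robots on the 3×3 grid graph, where each move rotates all robots on one or more vertex-disjoint cycles of the grid, has a single equivalence class. -/

import Mathlib

/-- The `n × n` grid graph: vertices `Fin n × Fin n`, edges between vertices at
`L₁`-distance `1`. -/
def gridGraph (n : ℕ) : SimpleGraph (Fin n × Fin n) :=
  SimpleGraph.fromRel fun a b => Nat.dist a.1.1 b.1.1 + Nat.dist a.2.1 b.2.1 = 1

/-- A legal single-step move of the fully occupied graph `G`: a permutation `σ` of the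
vertices such that every robot stays put or moves along an edge, and no two robots swap
along an edge (no head-on collision).  Equivalently (since `σ` is a bijection), `σ`
synchronously rotates the robots along a collection of vertex-disjoint cycles of `G`
(of length at least 3) and fixes all other robots. -/
def LegalMove {V : Type*} (G : SimpleGraph V) (σ : Equiv.Perm V) : Prop :=
  (∀ v, σ v = v ∨ G.Adj v (σ v)) ∧ ∀ v, σ v ≠ v → σ (σ v) ≠ v

/-- One legal move between configurations (bijections from robots to vertices). -/
def Step {R V : Type*} (G : SimpleGraph V) (c c' : R ≃ V) : Prop :=
  ∃ σ : Equiv.Perm V, LegalMove G σ ∧ c' = c.trans σ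

namespace NinePuzzle

open Equiv Equiv.Perm

abbrev V3 := Fin 3 × Fin 3

instance : DecidableRel (gridGraph 3).Adj := fun a b => by
  rw [gridGraph, SimpleGraph.fromRel_adj]; exact instDecidableAnd

instance (σ : Perm V3) : Decidable (LegalMove (gridGraph 3) σ) := by
  rw [LegalMove]; exact instDecidableAnd

/-- Rotation of the outer 8-cycle of the grid. -/
def ρ : Perm V3 :=
  swap (0,0) (0,1) * swap (0,1) (0,2) * swap (0,2) (1,2) * swap (1,2) (2,2) *
  swap (2,2) (2,1) * swap (2,1) (2,0) * swap (2,0) (1,0)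

/-- Rotation of the top-left 2×2 square. -/
def τ : Perm V3 :=
  swap (0,0) (0,1) * swap (0,1) (1,1) * swap (1,1) (1,0)

lemma legal_ρ : LegalMove (gridGraph 3) ρ := by decide
lemma legal_τ : LegalMove (gridGraph 3) τ := by decide

def H : Subgroup (Perm V3) := Subgroup.closure {σ | LegalMove (gridGraph 3) σ}

lemma ρ_mem : ρ ∈ H := Subgroup.subset_closure legal_ρ
lemma τ_mem : τ ∈ H := Subgroup.subset_closure legal_τ

/-- The full 9-cycle. -/
def σ₀ : Perm V3 := ρ * τ

lemma σ₀_mem : σ₀ ∈ H := mul_mem ρ_mem τ_mem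

def cycList : List V3 := [(0,0),(0,2),(1,2),(2,2),(2,1),(2,0),(1,0),(0,1),(1,1)]

lemma σ₀_eq : σ₀ = cycList.formPerm := by
  set_option maxRecDepth 100000 in decide

lemma σ₀_isCycle : σ₀.IsCycle := by
  rw [σ₀_eq]
  exact List.isCycle_formPerm (by decide) (by decide)
lemma σ₀_support : σ₀.support = Finset.univ := by decide

lemma swap_word : Equiv.swap ((0,0) : V3) ((0,2) : V3) =
    τ⁻¹ * ρ * τ * τ * ρ⁻¹ * τ * ρ * ρ * ρ * τ * ρ * ρ * τ * ρ * ρ := by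
  set_option maxRecDepth 100000 in decide

lemma swap_mem : Equiv.swap ((0,0) : V3) ((0,2) : V3) ∈ H := by
  rw [swap_word]
  exact mul_mem (mul_mem (mul_mem (mul_mem (mul_mem (mul_mem (mul_mem (mul_mem (mul_mem
    (mul_mem (mul_mem (mul_mem (mul_mem (mul_mem (inv_mem τ_mem) ρ_mem) τ_mem) τ_mem)
    (inv_mem ρ_mem)) τ_mem) ρ_mem) ρ_mem) ρ_mem) τ_mem) ρ_mem) ρ_mem) τ_mem) ρ_mem) ρ_mem

lemma H_top : H = ⊤ := by
  rw [eq_top_iff, ← Equiv.Perm.closure_cycle_adjacent_swap σ₀_isCycle σ₀_support ((0,0) : V3)]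
  apply (Subgroup.closure_le _).2
  rintro g (rfl | rfl)
  · exact σ₀_mem
  · have h : σ₀ ((0,0) : V3) = ((0,2) : V3) := by decide
    rw [h]; exact swap_mem

lemma legal_inv {σ : Perm V3} (h : LegalMove (gridGraph 3) σ) :
    LegalMove (gridGraph 3) σ⁻¹ := by
  obtain ⟨h1, h2⟩ := h
  constructor
  · intro v
    rcases h1 (σ⁻¹ v) with hv | hv
    · left; conv_lhs => rw [← hv]
      simp
    · right
      have : σ (σ⁻¹ v) = v := by simp
      rw [this] at hv
      exact hv.symm
  · intro v hv hcon
    have hu : σ v = σ⁻¹ v := by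
      have h := congrArg σ hcon
      simp only [Equiv.Perm.inv_def, Equiv.apply_symm_apply] at h
      exact h.symm
    have h1 : σ v ≠ v := by rw [hu]; exact hv
    apply h2 v h1
    rw [hu]; simp

lemma step_symm : ∀ {d d' : Fin 9 ≃ V3}, Step (gridGraph 3) d d' → Step (gridGraph 3) d' d := by
  rintro d d' ⟨σ, hσ, rfl⟩
  exact ⟨σ⁻¹, legal_inv hσ, by
    rw [Equiv.Perm.inv_def, Equiv.trans_assoc, Equiv.self_trans_symm, Equiv.trans_refl]⟩

lemma reach (π : Perm V3) (d : Fin 9 ≃ V3) :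
    Relation.ReflTransGen (Step (gridGraph 3)) d (d.trans π) := by
  have hπ : π ∈ H := by rw [H_top]; trivial
  induction hπ using Subgroup.closure_induction generalizing d with
  | mem σ hσ => exact Relation.ReflTransGen.single ⟨σ, hσ, rfl⟩
  | one =>
    rw [show (1 : Perm V3) = Equiv.refl V3 from rfl, Equiv.trans_refl]
  | mul a b _ _ ha hb =>
    have : d.trans (a * b) = (d.trans b).trans a := by
      rw [Equiv.Perm.mul_def, ← Equiv.trans_assoc]
    rw [this]
    exact (hb d).trans (ha (d.trans b))
  | inv a _ ha =>
    have h1 := ha (d.trans a⁻¹)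
    have h2 : (d.trans a⁻¹).trans a = d := by
      rw [Equiv.Perm.inv_def, Equiv.trans_assoc, Equiv.symm_trans_self, Equiv.trans_refl]
    rw [h2] at h1
    exact (@Relation.ReflTransGen.stdSymm _ _ ⟨fun _ _ => step_symm⟩).symm _ _ h1

end NinePuzzle

/-- All configurations of the 9-puzzle are connected via legal moves: any configuration of
9 labeled robots on the 3×3 grid graph can be transformed into any other by a sequence of
synchronous rotations along vertex-disjoint cycles. -/
theorem stmt4 (c c' : Fin 9 ≃ Fin 3 × Fin 3) :
    Relation.ReflTransGen (Step (gridGraph 3)) c c' := by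
  have h := NinePuzzle.reach (Equiv.trans c.symm c') c
  have : c.trans (Equiv.trans c.symm c') = c' := by
    rw [← Equiv.trans_assoc, Equiv.self_trans_symm, Equiv.refl_trans]
  rwa [this] at h
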